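/- Integer packing existence. Let P ⊆ ℝⁿ, let f : ℝⁿ → ℝᵐ be affine with 0 ≤ f_j(x) ≤ ω for all x ∈ P and j ∈ {1,…,m} (0 < ω ≤ 1), and let λ* = min_{x∈P} max_j f_j(x) > 0. Let X_1, …, X_s be independent P-valued random vectors with E[f_j(X_i)] ≤ λ* for every i and j, and suppose s ≤ 1/λ*. Then for every ε > 0, Pr[ ∃ j : Σ_{i=1}^s f_j(X_i) ≥ 1 + ε ] < m / exp(b(ε)/ω), where b(ε) = (1+ε)ln(1+ε) − ε. -/

import Mathlib

open MeasureTheory ProbabilityTheory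

/-- **Integer packing existence** (Lemma 11 of the paper).
Let `f : ℝⁿ → ℝᵐ` be affine with `0 ≤ f x j ≤ w` on `P` (`0 < w ≤ 1`) and let
`lam = min_{x ∈ P} max_j f x j > 0`.  If `X 1, …, X s` are independent
`P`-valued random vectors with `E[f (X i) j] ≤ lam` for all `i, j` and
`s ≤ 1/lam`, then for every `ε > 0` the probability that
`Σᵢ f (X i) j ≥ 1 + ε` for some `j` is less than `m / exp (b(ε)/w)`,
where `b(ε) = (1+ε)ln(1+ε) − ε`. -/
theorem integer_packing_existence {Ω : Type*} [MeasurableSpace Ω]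
    (μ : Measure Ω) [IsProbabilityMeasure μ]
    (n m s : ℕ) (hm : 1 ≤ m)
    (P : Set (Fin n → ℝ)) (f : (Fin n → ℝ) →ᵃ[ℝ] (Fin m → ℝ))
    (w : ℝ) (hw : 0 < w) (hw1 : w ≤ 1)
    (hfb : ∀ x ∈ P, ∀ j, f x j ∈ Set.Icc 0 w)
    (lam : ℝ) (hlam : IsLeast ((fun x => ⨆ j, f x j) '' P) lam)
    (hlampos : 0 < lam)
    (hs : (s : ℝ) ≤ 1 / lam)
    (X : Fin s → Ω → (Fin n → ℝ))
    (hmeas : ∀ i, Measurable (X i))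
    (hP : ∀ i, ∀ ω, X i ω ∈ P)
    (hindep : iIndepFun X μ)
    (hmean : ∀ i j, ∫ ω, f (X i ω) j ∂μ ≤ lam)
    (ε : ℝ) (hε : 0 < ε) :
    μ {ω | ∃ j, 1 + ε ≤ ∑ i, f (X i ω) j}
      < ENNReal.ofReal
          (m * Real.exp (-(((1 + ε) * Real.log (1 + ε) - ε) / w))) := by
  classical
  have hw0 : w ≠ 0 := hw.ne'
  have h1ε : (0:ℝ) < 1 + ε := by linarith
  set t : ℝ := Real.log (1 + ε) / w with ht_def
  have hlog : 0 < Real.log (1 + ε) := Real.log_pos (by linarith)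
  have ht : 0 < t := div_pos hlog hw
  have htw : t * w = Real.log (1 + ε) := by rw [ht_def]; field_simp
  have hexp_tw : Real.exp (t * w) = 1 + ε := by rw [htw, Real.exp_log h1ε]
  set R : ℝ := Real.exp (-(((1 + ε) * Real.log (1 + ε) - ε) / w)) with hR
  have hRpos : 0 < R := Real.exp_pos _
  have hfc : ∀ j : Fin m, Measurable fun x : Fin n → ℝ => f x j :=
    fun j => ((continuous_apply j).comp f.continuous_of_finiteDimensional).measurable
  have hYmeas : ∀ (j : Fin m) (i : Fin s), Measurable fun ω => f (X i ω) j :=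
    fun j i => (hfc j).comp (hmeas i)
  have hY0 : ∀ (j : Fin m) (i : Fin s) (ω : Ω), 0 ≤ f (X i ω) j :=
    fun j i ω => (hfb _ (hP i ω) j).1
  have hYw : ∀ (j : Fin m) (i : Fin s) (ω : Ω), f (X i ω) j ≤ w :=
    fun j i ω => (hfb _ (hP i ω) j).2
  -- Per-coordinate Chernoff bound
  have key : ∀ j : Fin m, (μ {ω | 1 + ε ≤ ∑ i, f (X i ω) j}).toReal < R := by
    intro j
    set Y : Fin s → Ω → ℝ := fun i ω => f (X i ω) j with hYdef
    have hYint : ∀ i, Integrable (Y i) μ := by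
      intro i
      refine (integrable_const w).mono' (hYmeas j i).aestronglyMeasurable ?_
      exact Filter.Eventually.of_forall fun ω => by
        rw [Real.norm_eq_abs, abs_of_nonneg (hY0 j i ω)]; exact hYw j i ω
    have hexpint : ∀ i, Integrable (fun ω => Real.exp (t * Y i ω)) μ := by
      intro i
      refine (integrable_const (Real.exp (t * w))).mono'
        (((hYmeas j i).const_mul t).exp.aestronglyMeasurable) ?_
      exact Filter.Eventually.of_forall fun ω => by
        rw [Real.norm_eq_abs, abs_of_pos (Real.exp_pos _), Real.exp_le_exp]
        exact mul_le_mul_of_nonneg_left (hYw j i ω) ht.le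
    have hEnonneg : ∀ i, 0 ≤ ∫ ω, Y i ω ∂μ :=
      fun i => integral_nonneg fun ω => hY0 j i ω
    by_cases hzero : ∀ i, ∫ ω, Y i ω ∂μ = 0
    · -- all means vanish: the sum is a.e. zero
      have hae : ∀ᵐ ω ∂μ, ∀ i, Y i ω = 0 := by
        rw [ae_all_iff]
        intro i
        exact (integral_eq_zero_iff_of_nonneg (fun ω => hY0 j i ω) (hYint i)).1 (hzero i)
      have h0 : ∀ᵐ ω ∂μ, ¬ (1 + ε ≤ ∑ i, f (X i ω) j) := by
        filter_upwards [hae] with ω hω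
        have : ∑ i, f (X i ω) j = 0 := Finset.sum_eq_zero fun i _ => hω i
        rw [this]; linarith
      have hnull : μ {ω | 1 + ε ≤ ∑ i, f (X i ω) j} = 0 := by
        have := ae_iff.mp h0
        simpa [not_not] using this
      rw [hnull]; simpa using hRpos
    · push_neg at hzero
      obtain ⟨i0, hi0⟩ := hzero
      have hi0pos : 0 < ∫ ω, Y i0 ω ∂μ := (hEnonneg i0).lt_of_ne (Ne.symm hi0)
      have hYindep : iIndepFun Y μ :=
        hindep.comp (fun _ x => f x j) (fun _ => hfc j)
      have hset : {ω | 1 + ε ≤ ∑ i, f (X i ω) j} = {ω | 1 + ε ≤ (∑ i, Y i) ω} := by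
        ext ω; simp [hYdef, Finset.sum_apply]
      have hsumint : Integrable (fun ω => Real.exp (t * (∑ i, Y i) ω)) μ :=
        hYindep.integrable_exp_mul_sum (fun i => hYmeas j i) (fun i _ => hexpint i)
      have hch := measure_ge_le_exp_mul_mgf (μ := μ) (X := ∑ i, Y i) (1 + ε) ht.le hsumint
      have hmgf : mgf (∑ i, Y i) μ t = ∏ i, mgf (Y i) μ t :=
        hYindep.mgf_sum (fun i => hYmeas j i) Finset.univ
      -- pointwise convexity bound and mgf estimate
      have hbound : ∀ i, mgf (Y i) μ t ≤ 1 + (∫ ω, Y i ω ∂μ) * (ε / w) := by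
        intro i
        have hpt : ∀ ω, Real.exp (t * Y i ω) ≤ 1 + Y i ω * (ε / w) := by
          intro ω
          have hy0 := hY0 j i ω
          have hyw := hYw j i ω
          have ha : (0:ℝ) ≤ 1 - Y i ω / w := by
            have : Y i ω / w ≤ 1 := (div_le_one hw).2 hyw
            linarith
          have hb : (0:ℝ) ≤ Y i ω / w := div_nonneg hy0 hw.le
          have hconv := convexOn_exp.2 (Set.mem_univ (0:ℝ)) (Set.mem_univ (t * w))
            ha hb (by ring)
          rw [smul_eq_mul, smul_eq_mul, smul_eq_mul, smul_eq_mul, mul_zero, zero_add,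
            Real.exp_zero, hexp_tw] at hconv
          have harg : Y i ω / w * (t * w) = t * Y i ω := by field_simp
          rw [harg] at hconv
          have : (1 - Y i ω / w) * 1 + Y i ω / w * (1 + ε) = 1 + Y i ω * (ε / w) := by
            field_simp; ring
          linarith [hconv]
        have hint2 : Integrable (fun ω => 1 + Y i ω * (ε / w)) μ :=
          (integrable_const 1).add ((hYint i).mul_const _)
        calc mgf (Y i) μ t = ∫ ω, Real.exp (t * Y i ω) ∂μ := rfl
          _ ≤ ∫ ω, (1 + Y i ω * (ε / w)) ∂μ :=
              integral_mono (hexpint i) hint2 hpt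
          _ = 1 + (∫ ω, Y i ω ∂μ) * (ε / w) := by
              rw [integral_add (integrable_const 1) ((hYint i).mul_const _),
                integral_mul_const]
              simp
      have hexpb : ∀ i, 1 + (∫ ω, Y i ω ∂μ) * (ε / w)
          ≤ Real.exp ((ε / w) * ∫ ω, Y i ω ∂μ) := by
        intro i
        have := Real.add_one_le_exp ((ε / w) * ∫ ω, Y i ω ∂μ)
        linarith [this]
      have hstrict : 1 + (∫ ω, Y i0 ω ∂μ) * (ε / w)
          < Real.exp ((ε / w) * ∫ ω, Y i0 ω ∂μ) := by
        have hne : (ε / w) * ∫ ω, Y i0 ω ∂μ ≠ 0 :=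
          ne_of_gt (mul_pos (div_pos hε hw) hi0pos)
        have := Real.add_one_lt_exp hne
        linarith [this]
      have hmgfpos : ∀ i, 0 < mgf (Y i) μ t := fun i => mgf_pos (hexpint i)
      have hprod : ∏ i, mgf (Y i) μ t
          < ∏ i, Real.exp ((ε / w) * ∫ ω, Y i ω ∂μ) := by
        refine Finset.prod_lt_prod (fun i _ => hmgfpos i)
          (fun i _ => (hbound i).trans (hexpb i)) ⟨i0, Finset.mem_univ i0, ?_⟩
        exact (hbound i0).trans_lt hstrict
      have hEsum : ∑ i, ∫ ω, Y i ω ∂μ ≤ 1 := by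
        have h1 : ∑ i, ∫ ω, Y i ω ∂μ ≤ ∑ _i : Fin s, lam :=
          Finset.sum_le_sum fun i _ => hmean i j
        have h2 : ∑ _i : Fin s, lam = (s : ℝ) * lam := by
          simp [Finset.sum_const, nsmul_eq_mul]
        have h3 : (s : ℝ) * lam ≤ 1 := by
          calc (s:ℝ) * lam ≤ (1/lam) * lam :=
              mul_le_mul_of_nonneg_right hs hlampos.le
            _ = 1 := by field_simp
        linarith
      have hprodexp : ∏ i, Real.exp ((ε / w) * ∫ ω, Y i ω ∂μ)
          = Real.exp (∑ i, (ε / w) * ∫ ω, Y i ω ∂μ) := (Real.exp_sum _ _).symm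
      have hsumle : Real.exp (∑ i, (ε / w) * ∫ ω, Y i ω ∂μ) ≤ Real.exp (ε / w) := by
        rw [Real.exp_le_exp, ← Finset.mul_sum]
        calc (ε / w) * ∑ i, ∫ ω, Y i ω ∂μ ≤ (ε / w) * 1 :=
            mul_le_mul_of_nonneg_left hEsum (div_pos hε hw).le
          _ = ε / w := mul_one _
      have hfinal : Real.exp (-t * (1 + ε)) * Real.exp (ε / w) = R := by
        rw [← Real.exp_add, hR]
        congr 1
        rw [ht_def]
        field_simp
        ring
      rw [hset]
      calc (μ {ω | 1 + ε ≤ (∑ i, Y i) ω}).toReal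
          ≤ Real.exp (-t * (1 + ε)) * mgf (∑ i, Y i) μ t := hch
        _ = Real.exp (-t * (1 + ε)) * ∏ i, mgf (Y i) μ t := by rw [hmgf]
        _ < Real.exp (-t * (1 + ε)) * ∏ i, Real.exp ((ε / w) * ∫ ω, Y i ω ∂μ) :=
            mul_lt_mul_of_pos_left hprod (Real.exp_pos _)
        _ ≤ Real.exp (-t * (1 + ε)) * Real.exp (ε / w) := by
            rw [hprodexp]
            exact mul_le_mul_of_nonneg_left hsumle (Real.exp_pos _).le
        _ = R := hfinal
  -- union bound
  have hne : Nonempty (Fin m) := ⟨⟨0, hm⟩⟩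
  have hU : {ω | ∃ j, 1 + ε ≤ ∑ i, f (X i ω) j}
      = ⋃ j, {ω | 1 + ε ≤ ∑ i, f (X i ω) j} := by
    ext ω; simp
  rw [hU, ENNReal.lt_ofReal_iff_toReal_lt (measure_ne_top μ _)]
  have hsumfin : (∑ j, μ {ω | 1 + ε ≤ ∑ i, f (X i ω) j}) ≠ ⊤ :=
    (ENNReal.sum_lt_top.2 fun j _ => measure_lt_top μ _).ne
  calc (μ (⋃ j, {ω | 1 + ε ≤ ∑ i, f (X i ω) j})).toReal
      ≤ (∑ j, μ {ω | 1 + ε ≤ ∑ i, f (X i ω) j}).toReal :=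
        ENNReal.toReal_mono hsumfin (measure_iUnion_fintype_le μ _)
    _ = ∑ j, (μ {ω | 1 + ε ≤ ∑ i, f (X i ω) j}).toReal :=
        ENNReal.toReal_sum fun j _ => measure_ne_top μ _
    _ < ∑ _j : Fin m, R :=
        Finset.sum_lt_sum_of_nonempty Finset.univ_nonempty fun j _ => key j
    _ = m * R := by simp [Finset.sum_const, nsmul_eq_mul, Finset.card_univ]
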